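/- Let X be a real Hilbert space, F : X → X a monotone operator, μ ∈ (0, 1/2], and suppose the Lavrentiev-type variational source condition ⟨x† − x̄, x† − x⟩ ≤ β‖x − x†‖² + ⟨F(x) − F(x†), x − x†⟩^μ holds for all x ∈ M, where β ∈ [0,1), M ⊆ X, and F(x†) = y. Then there is a constant K > 0 depending only on β and μ such that for every δ ∈ (0,1], every yδ ∈ X with ‖y − yδ‖ ≤ δ, and every xαδ ∈ M satisfying F(xαδ) + α(xαδ − x̄) = yδ with the a priori choice α = δ^{2(1−μ)/(2−μ)}, one has the Hölder rate ‖xαδ − x†‖ ≤ K δ^{μ/(2−μ)}. -/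

import Mathlib

open RealInnerProductSpace

/-- Quadratic inequality: if a t² ≤ b t + c then t ≤ b/a + √(c/a). -/
lemma quad_bound {a b c t : ℝ} (ha : 0 < a) (hb : 0 ≤ b) (hc : 0 ≤ c) (ht : 0 ≤ t)
    (h : a * t ^ 2 ≤ b * t + c) : t ≤ b / a + Real.sqrt (c / a) := by
  by_contra h'
  push_neg at h'
  set s := Real.sqrt (c / a) with hs
  have hsnn : 0 ≤ s := Real.sqrt_nonneg _
  have hs2 : s ^ 2 = c / a := Real.sq_sqrt (by positivity)
  have hba : 0 ≤ b / a := by positivity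
  have h1 : s < t := lt_of_le_of_lt (le_add_of_nonneg_left hba) h'
  have h2 : b + a * s < a * t := by
    have h3 := mul_lt_mul_of_pos_left h' ha
    rw [mul_add, mul_div_cancel₀ _ (ne_of_gt ha)] at h3
    linarith
  have hc2 : a * s ^ 2 = c := by rw [hs2, mul_div_cancel₀ _ (ne_of_gt ha)]
  have ht' : 0 < t := lt_of_le_of_lt (by positivity) h'
  nlinarith [mul_lt_mul_of_pos_right h2 ht', mul_le_mul_of_nonneg_left h1.le hsnn]

/-- Hölder rate under the Lavrentiev-type variational source condition with φ(t) = t^μ,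
μ ∈ (0,1/2]: with the a priori choice α = δ^{2(1−μ)/(2−μ)} one gets
‖x_α^δ − x†‖ = O(δ^{μ/(2−μ)}). -/
theorem stmt_13 {X : Type*} [NormedAddCommGroup X] [InnerProductSpace ℝ X] [CompleteSpace X]
    (F : X → X) (hmono : ∀ x x' : X, 0 ≤ ⟪F x - F x', x - x'⟫)
    (y xbar xdag : X) (hsol : F xdag = y)
    (μ : ℝ) (hμ0 : 0 < μ) (hμ1 : μ ≤ 1 / 2)
    (β : ℝ) (hβ0 : 0 ≤ β) (hβ1 : β < 1)
    (M : Set X)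
    (hvsc : ∀ x ∈ M,
      ⟪xdag - xbar, xdag - x⟫ ≤ β * ‖x - xdag‖ ^ 2 + ⟪F x - F xdag, x - xdag⟫ ^ μ) :
    ∃ K : ℝ, 0 < K ∧ ∀ δ : ℝ, 0 < δ → δ ≤ 1 → ∀ yδ : X, ‖y - yδ‖ ≤ δ →
      ∀ xad ∈ M, F xad + (δ ^ (2 * (1 - μ) / (2 - μ))) • (xad - xbar) = yδ →
        ‖xad - xdag‖ ≤ K * δ ^ (μ / (2 - μ)) := by
  have hμ1' : μ < 1 := lt_of_le_of_lt hμ1 (by norm_num)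
  have h1μ : (0:ℝ) < 1 - μ := by linarith
  have h2μ : (0:ℝ) < 2 - μ := by linarith
  have h1β : (0:ℝ) < 1 - β := by linarith
  refine ⟨2 / (1 - β), by positivity, ?_⟩
  intro δ hδ hδ1 yδ hnoise xad hM heq
  set p : ℝ := 2 * (1 - μ) / (2 - μ) with hp
  set ε : ℝ := μ / (2 - μ) with hε
  set α : ℝ := δ ^ p with hα
  have hα0 : 0 < α := Real.rpow_pos_of_pos hδ _
  set e : X := xad - xdag with he
  set t : ℝ := ‖e‖ with htdef
  have ht0 : 0 ≤ t := norm_nonneg _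
  set s : ℝ := ⟪F xad - F xdag, xad - xdag⟫ with hsdef
  have hs0 : 0 ≤ s := hmono _ _
  -- basic identity
  have heq2 : F xad - F xdag + α • (xad - xbar) = yδ - y := by
    rw [hsol]; rw [← heq]; abel
  have key : s + α * ⟪xad - xbar, e⟫ = ⟪yδ - y, e⟫ := by
    rw [← heq2, inner_add_left, real_inner_smul_left, hsdef, he]
  have hdecomp : ⟪xad - xbar, e⟫ = t ^ 2 - ⟪xdag - xbar, xdag - xad⟫ := by
    have h4 : xad - xbar = e + (xdag - xbar) := by rw [he]; abel
    rw [h4, inner_add_left, real_inner_self_eq_norm_sq, htdef]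
    have h5 : xdag - xad = -e := by rw [he]; abel
    rw [h5, inner_neg_right]
    ring
  have hcs : ⟪yδ - y, e⟫ ≤ δ * t := by
    calc ⟪yδ - y, e⟫ ≤ ‖yδ - y‖ * ‖e‖ := real_inner_le_norm _ _
    _ ≤ δ * t := by
        rw [htdef]
        exact mul_le_mul_of_nonneg_right (by rwa [norm_sub_rev]) ht0
  have hv := hvsc xad hM
  rw [← he, ← htdef, ← hsdef] at hv
  -- main inequality: s + α(1-β) t² ≤ δ t + α s^μ
  have hmain : s + α * (1 - β) * t ^ 2 ≤ δ * t + α * s ^ μ := by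
    have h1 : s + α * (t ^ 2 - ⟪xdag - xbar, xdag - xad⟫) ≤ δ * t := by
      rw [← hdecomp]; linarith [key, hcs]
    nlinarith [mul_le_mul_of_nonneg_left hv (le_of_lt hα0)]
  -- absorb α s^μ : α s^μ ≤ s + A with A = α^(1/(1-μ))
  set A : ℝ := α ^ (1 / (1 - μ)) with hA
  have hA0 : 0 < A := Real.rpow_pos_of_pos hα0 _
  have habsorb : α * s ^ μ ≤ s + A := by
    rcases le_or_gt s A with hcase | hcase
    · have h1 : s ^ μ ≤ A ^ μ := Real.rpow_le_rpow hs0 hcase (le_of_lt hμ0)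
      have h2 : α * A ^ μ = A := by
        rw [hA]
        calc α * (α ^ (1/(1-μ))) ^ μ = α ^ (1 + 1/(1-μ) * μ) := by
              rw [Real.rpow_add hα0, Real.rpow_one, ← Real.rpow_mul hα0.le]
        _ = α ^ (1/(1-μ)) := by
              congr 1
              field_simp
              ring
      have h3 : α * s ^ μ ≤ α * A ^ μ := mul_le_mul_of_nonneg_left h1 hα0.le
      linarith
    · have hspos : 0 < s := hA0.trans hcase
      have h1 : α ≤ s ^ (1 - μ) := by
        have h2 : A ^ (1 - μ) ≤ s ^ (1 - μ) := Real.rpow_le_rpow hA0.le hcase.le h1μ.le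
        have h3 : A ^ (1 - μ) = α := by
          rw [hA, ← Real.rpow_mul hα0.le, one_div_mul_cancel (ne_of_gt h1μ), Real.rpow_one]
        linarith
      have h4 : s ^ (1 - μ) * s ^ μ = s := by
        have h5 : (1 - μ) + μ = (1:ℝ) := by ring
        rw [← Real.rpow_add hspos, h5, Real.rpow_one]
      have h6 : α * s ^ μ ≤ s ^ (1 - μ) * s ^ μ :=
        mul_le_mul_of_nonneg_right h1 (Real.rpow_nonneg hs0 μ)
      linarith
  -- quadratic inequality
  have hq : α * (1 - β) * t ^ 2 ≤ δ * t + A := by linarith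
  have hquad := quad_bound (mul_pos hα0 h1β) hδ.le hA0.le ht0 hq
  -- exponent arithmetic
  have hpε : ε + p = 1 := by
    rw [hε, hp]
    field_simp
    ring
  have e1 : δ / α = δ ^ ε := by
    rw [div_eq_iff (ne_of_gt hα0), hα, ← Real.rpow_add hδ, hpε, Real.rpow_one]
  have e2 : A = α * (δ ^ ε) ^ 2 := by
    rw [hA, hα, ← Real.rpow_natCast (δ ^ ε) 2, ← Real.rpow_mul hδ.le,
      ← Real.rpow_mul hδ.le, ← Real.rpow_add hδ]
    congr 1
    rw [hp, hε]
    push_cast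
    field_simp
    ring
  have hterm1 : δ / (α * (1 - β)) = δ ^ ε / (1 - β) := by
    rw [← div_div, e1]
  have hterm2 : Real.sqrt (A / (α * (1 - β))) ≤ δ ^ ε / (1 - β) := by
    have hAa : A / (α * (1 - β)) = (δ ^ ε) ^ 2 / (1 - β) := by
      rw [e2]
      field_simp
    have hde : 0 ≤ δ ^ ε := (Real.rpow_pos_of_pos hδ ε).le
    have hle : (δ ^ ε) ^ 2 / (1 - β) ≤ (δ ^ ε / (1 - β)) ^ 2 := by
      rw [div_pow]
      apply div_le_div_of_nonneg_left (by positivity) (by positivity) (by nlinarith)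
    calc Real.sqrt (A / (α * (1 - β))) ≤ Real.sqrt ((δ ^ ε / (1 - β)) ^ 2) := by
          rw [hAa]; exact Real.sqrt_le_sqrt hle
    _ = δ ^ ε / (1 - β) := Real.sqrt_sq (by positivity)
  calc t ≤ δ / (α * (1 - β)) + Real.sqrt (A / (α * (1 - β))) := hquad
  _ ≤ δ ^ ε / (1 - β) + δ ^ ε / (1 - β) := by rw [hterm1]; linarith
  _ = 2 / (1 - β) * δ ^ ε := by ring
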